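/- Let n ≥ 2 and let μ, ν : Fin n → ℤ. If Ã(μ) = Ã(ν) ≠ 0 or Ã(μ) = −Ã(ν) ≠ 0 in the group algebra, then ν lies in the S_n-orbit of μ, i.e. ν = μ ∘ σ for some permutation σ ∈ S_n. (This is the type-A instance of the statement that if E^ρ(λ₁) = ±E^ρ(λ₂) ≠ 0 then λ₁ and λ₂ lie in the same shifted Weyl-group orbit.) -/

import Mathlib

open Finset

/-- The alternating sum `Ã(μ) = Σ_{σ ∈ S_n} sign(σ)·X^{σ·μ}` in the group
algebra `AddMonoidAlgebra ℤ (Fin n → ℤ)`, where `(σ·μ)_i = μ_{σ⁻¹(i)}`. -/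
noncomputable def Atilde (n : ℕ) (μ : Fin n → ℤ) : AddMonoidAlgebra ℤ (Fin n → ℤ) :=
  ∑ σ : Equiv.Perm (Fin n),
    (Equiv.Perm.sign σ : ℤ) • AddMonoidAlgebra.single (fun i => μ (σ⁻¹ i)) 1

lemma Atilde_apply_ne_zero {n : ℕ} {μ : Fin n → ℤ} {x : Fin n → ℤ}
    (hx : (Atilde n μ).coeff x ≠ 0) : ∃ σ : Equiv.Perm (Fin n), x = fun i => μ (σ⁻¹ i) := by
  by_contra hc
  push_neg at hc
  apply hx
  show (∑ σ : Equiv.Perm (Fin n),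
    (Equiv.Perm.sign σ : ℤ) • AddMonoidAlgebra.single (fun i => μ (σ⁻¹ i)) (1 : ℤ)).coeff x = 0
  rw [AddMonoidAlgebra.coeff_sum, Finsupp.finset_sum_apply]
  apply Finset.sum_eq_zero
  intro σ _
  rw [AddMonoidAlgebra.coeff_smul_apply, AddMonoidAlgebra.coeff_single, Finsupp.single_apply, if_neg (fun h => hc σ h.symm)]
  simp

/-- Lemma 3.1 (2) of the paper, type `A`.
For `n ≥ 2` and tuples `μ, ν : Fin n → ℤ`: if `Ã(μ) = Ã(ν) ≠ 0` or
`Ã(μ) = −Ã(ν) ≠ 0`, then `ν` lies in the `S_n`-orbit of `μ`. -/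
theorem stmt19 (n : ℕ) (hn : 2 ≤ n) (μ ν : Fin n → ℤ)
    (h : (Atilde n μ = Atilde n ν ∧ Atilde n ν ≠ 0) ∨
         (Atilde n μ = - Atilde n ν ∧ Atilde n ν ≠ 0)) :
    ∃ σ : Equiv.Perm (Fin n), ν = μ ∘ σ := by
  have hν : Atilde n ν ≠ 0 := h.elim And.right And.right
  obtain ⟨x, hx⟩ : ∃ x, (Atilde n ν).coeff x ≠ 0 := by
    by_contra hc
    push_neg at hc
    exact hν (AddMonoidAlgebra.ext (Finsupp.ext hc))
  have hxμ : (Atilde n μ).coeff x ≠ 0 := by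
    rcases h with ⟨heq, -⟩ | ⟨heq, -⟩
    · rw [heq]; exact hx
    · rw [heq]
      intro hz
      apply hx
      have : -((Atilde n ν).coeff x) = 0 := by rw [← Finsupp.neg_apply]; exact hz
      linarith
  obtain ⟨σ, hσ⟩ := Atilde_apply_ne_zero hxμ
  obtain ⟨τ, hτ⟩ := Atilde_apply_ne_zero hx
  refine ⟨τ.trans σ⁻¹, ?_⟩
  funext j
  have := congrFun (hτ.symm.trans hσ) (τ j)
  simpa using this
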